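/- Fix an integer K ≥ 2. For σ > 0 define f_σ : ℝ → ℝ by f_σ(x) = Σ_{k=1}^{K−1} [ ((2k−1)π − 2kπ/K)·exp(−(x − 2kπ/K)²/(2σ²)) + (2kπ/K − (2k−1)π)·exp(−(x + 2kπ/K)²/(2σ²)) ]. Then for every x ∈ ℝ, f_σ is differentiable at x, and the derivative f_σ′(x) tends to 0 as σ tends to 0 from the right. -/

import Mathlib

open Real Filter

/-- Derivative of a Gaussian bump. -/
lemma hasDerivAt_gauss (a σ x : ℝ) (hσ : σ ≠ 0) :
    HasDerivAt (fun y => Real.exp (-(y - a) ^ 2 / (2 * σ ^ 2)))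
      (Real.exp (-(x - a) ^ 2 / (2 * σ ^ 2)) * (-(x - a) / σ ^ 2)) x := by
  have hinner : HasDerivAt (fun y => -(y - a) ^ 2 / (2 * σ ^ 2))
      (-(x - a) / σ ^ 2) x := by
    have h1 : HasDerivAt (fun y : ℝ => (y - a) ^ 2) (2 * (x - a)) x := by
      have := ((hasDerivAt_id x).sub_const a).fun_pow 2
      simpa [mul_comm] using this
    have : HasDerivAt (fun y => -(y - a) ^ 2 / (2 * σ ^ 2)) (-(2 * (x - a)) / (2 * σ ^ 2)) x :=
      (h1.fun_neg).div_const (2 * σ ^ 2)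
    convert this using 1
    field_simp
  have := (Real.hasDerivAt_exp (-(x - a) ^ 2 / (2 * σ ^ 2))).comp x hinner
  simpa [Function.comp_def] using this

lemma sq_tendsto_zero_within :
    Tendsto (fun σ : ℝ => σ ^ 2) (nhdsWithin 0 (Set.Ioi 0)) (nhdsWithin 0 (Set.Ioi 0)) := by
  rw [tendsto_nhdsWithin_iff]
  constructor
  · have : Tendsto (fun σ : ℝ => σ ^ 2) (nhds 0) (nhds 0) := by
      have := (continuous_pow 2).tendsto (0 : ℝ)
      simpa using this
    exact this.mono_left nhdsWithin_le_nhds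
  · filter_upwards [self_mem_nhdsWithin] with σ hσ
    exact pow_pos (show (0:ℝ) < σ from hσ) 2

/-- The key limit: the derivative of a Gaussian bump at a fixed point tends to 0 as σ → 0⁺. -/
lemma gauss_deriv_tendsto (a x : ℝ) :
    Tendsto (fun σ : ℝ => Real.exp (-(x - a) ^ 2 / (2 * σ ^ 2)) * (-(x - a) / σ ^ 2))
      (nhdsWithin 0 (Set.Ioi 0)) (nhds 0) := by
  by_cases hxa : x = a
  · simp [hxa]
  · set b := x - a with hb
    have hbne : b ≠ 0 := sub_ne_zero.2 hxa
    have hc : 0 < b ^ 2 / 2 := by positivity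
    have h1 : Tendsto (fun t : ℝ => (b ^ 2 / 2 * t) * Real.exp (-(b ^ 2 / 2 * t)))
        atTop (nhds 0) := by
      have := (tendsto_pow_mul_exp_neg_atTop_nhds_zero 1).comp
        (tendsto_id.const_mul_atTop hc)
      simpa [Function.comp_def] using this
    have h2 := h1.const_mul (-b * (2 / b ^ 2))
    rw [mul_zero] at h2
    have hinv : Tendsto (fun σ : ℝ => (σ ^ 2)⁻¹) (nhdsWithin 0 (Set.Ioi 0)) atTop :=
      tendsto_inv_nhdsGT_zero.comp sq_tendsto_zero_within
    have h3 := h2.comp hinv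
    apply h3.congr'
    filter_upwards [self_mem_nhdsWithin] with σ (hσ : 0 < σ)
    have hσ2 : σ ^ 2 ≠ 0 := by positivity
    simp only [Function.comp]
    have hexp : -(b ^ 2 / 2 * (σ ^ 2)⁻¹) = -b ^ 2 / (2 * σ ^ 2) := by
      field_simp
    rw [hexp]
    field_simp
  
theorem stmt_7 (K : ℕ) (hK : 2 ≤ K)
    (f : ℝ → ℝ → ℝ)
    (hf : ∀ (σ : ℝ) (y : ℝ), f σ y = ∑ k ∈ Finset.Icc 1 (K - 1),
      (((2 * (k : ℝ) - 1) * Real.pi - 2 * (k : ℝ) * Real.pi / K) *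
          Real.exp (-(y - 2 * (k : ℝ) * Real.pi / K) ^ 2 / (2 * σ ^ 2)) +
        (2 * (k : ℝ) * Real.pi / K - (2 * (k : ℝ) - 1) * Real.pi) *
          Real.exp (-(y + 2 * (k : ℝ) * Real.pi / K) ^ 2 / (2 * σ ^ 2))))
    (x : ℝ) :
    (∀ σ : ℝ, 0 < σ → DifferentiableAt ℝ (f σ) x) ∧
    Filter.Tendsto (fun σ : ℝ => deriv (f σ) x)
      (nhdsWithin 0 (Set.Ioi 0)) (nhds 0) := by
  -- abbreviations
  set a : ℕ → ℝ := fun k => 2 * (k : ℝ) * Real.pi / K with ha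
  set c : ℕ → ℝ := fun k => (2 * (k : ℝ) - 1) * Real.pi - 2 * (k : ℝ) * Real.pi / K with hc
  have hfun : ∀ σ : ℝ, f σ = fun y => ∑ k ∈ Finset.Icc 1 (K - 1),
      (c k * Real.exp (-(y - a k) ^ 2 / (2 * σ ^ 2)) +
       (-c k) * Real.exp (-(y - (-(a k))) ^ 2 / (2 * σ ^ 2))) := by
    intro σ
    funext y
    rw [hf σ y]
    apply Finset.sum_congr rfl
    intro k _
    simp only [ha, hc, sub_neg_eq_add, neg_sub]
  have hD : ∀ σ : ℝ, σ ≠ 0 → HasDerivAt (f σ)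
      (∑ k ∈ Finset.Icc 1 (K - 1),
        (c k * (Real.exp (-(x - a k) ^ 2 / (2 * σ ^ 2)) * (-(x - a k) / σ ^ 2)) +
         (-c k) * (Real.exp (-(x - (-(a k))) ^ 2 / (2 * σ ^ 2)) * (-(x - (-(a k))) / σ ^ 2)))) x := by
    intro σ hσ
    rw [hfun σ]
    apply HasDerivAt.fun_sum
    intro k _
    exact ((hasDerivAt_gauss (a k) σ x hσ).const_mul (c k)).add
      ((hasDerivAt_gauss (-(a k)) σ x hσ).const_mul (-c k))
  constructor
  · intro σ hσ
    exact (hD σ hσ.ne').differentiableAt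
  · have hderiv : ∀ᶠ σ in nhdsWithin (0:ℝ) (Set.Ioi 0), deriv (f σ) x =
        ∑ k ∈ Finset.Icc 1 (K - 1),
        (c k * (Real.exp (-(x - a k) ^ 2 / (2 * σ ^ 2)) * (-(x - a k) / σ ^ 2)) +
         (-c k) * (Real.exp (-(x - (-(a k))) ^ 2 / (2 * σ ^ 2)) * (-(x - (-(a k))) / σ ^ 2))) := by
      filter_upwards [self_mem_nhdsWithin] with σ (hσ : 0 < σ)
      exact (hD σ hσ.ne').deriv
    rw [Filter.tendsto_congr' hderiv]
    have : Tendsto (fun σ : ℝ => ∑ k ∈ Finset.Icc 1 (K - 1),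
        (c k * (Real.exp (-(x - a k) ^ 2 / (2 * σ ^ 2)) * (-(x - a k) / σ ^ 2)) +
         (-c k) * (Real.exp (-(x - (-(a k))) ^ 2 / (2 * σ ^ 2)) * (-(x - (-(a k))) / σ ^ 2))))
        (nhdsWithin 0 (Set.Ioi 0)) (nhds (∑ k ∈ Finset.Icc 1 (K - 1), (0:ℝ))) := by
      apply tendsto_finset_sum
      intro k _
      have h1 := (gauss_deriv_tendsto (a k) x).const_mul (c k)
      have h2 := (gauss_deriv_tendsto (-(a k)) x).const_mul (-c k)
      simpa using h1.add h2
    simpa using this
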